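/- Let a > 0, 0 < t* < π/(2a), and b > a·tan(a·t*). Define c > 0 by c² = cos²(a t*)/a² − sin²(a t*)/b², and d = b·t* + arccosh(cos(a t*)/(a c)). Then: (i) cos²(a t*)/a² − sin²(a t*)/b² > 0, so c is well defined; (ii) cos(a t*)/(a c) ≥ 1, so d is well defined; (iii) c·cosh(d − b·t*) = cos(a t*)/a; and (iv) b·c·sinh(d − b·t*) = sin(a t*). Consequently the function f defined by f(t) = cos(a t)/a for t ∈ [0, t*] and f(t) = c·cosh(d − b t) for t ∈ [t*, d/b] is C¹ at t = t*. -/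

import Mathlib

/-- Inverse hyperbolic cosine, for `x ≥ 1`. -/
noncomputable def arcosh (x : ℝ) : ℝ := Real.log (x + Real.sqrt (x ^ 2 - 1))

lemma cosh_arcosh {x : ℝ} (hx : 1 ≤ x) : Real.cosh (arcosh x) = x := by
  have hs : Real.sqrt (x ^ 2 - 1) ^ 2 = x ^ 2 - 1 :=
    Real.sq_sqrt (by nlinarith)
  have hs0 : 0 ≤ Real.sqrt (x ^ 2 - 1) := Real.sqrt_nonneg _
  have hy : 0 < x + Real.sqrt (x ^ 2 - 1) := by nlinarith
  rw [arcosh, Real.cosh_eq, Real.exp_log hy, ← Real.log_inv, Real.exp_log (by positivity)]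
  have hinv : (x + Real.sqrt (x ^ 2 - 1))⁻¹ = x - Real.sqrt (x ^ 2 - 1) :=
    inv_eq_of_mul_eq_one_right (by nlinarith)
  rw [hinv]; ring

lemma sinh_arcosh {x : ℝ} (hx : 1 ≤ x) : Real.sinh (arcosh x) = Real.sqrt (x ^ 2 - 1) := by
  have hs : Real.sqrt (x ^ 2 - 1) ^ 2 = x ^ 2 - 1 :=
    Real.sq_sqrt (by nlinarith)
  have hs0 : 0 ≤ Real.sqrt (x ^ 2 - 1) := Real.sqrt_nonneg _
  have hy : 0 < x + Real.sqrt (x ^ 2 - 1) := by nlinarith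
  rw [arcosh, Real.sinh_eq, Real.exp_log hy, ← Real.log_inv, Real.exp_log (by positivity)]
  have hinv : (x + Real.sqrt (x ^ 2 - 1))⁻¹ = x - Real.sqrt (x ^ 2 - 1) :=
    inv_eq_of_mul_eq_one_right (by nlinarith)
  rw [hinv]; ring

set_option maxHeartbeats 1000000 in
/-- Example 2 (construction of the torus from a sphere and hyperbolic annuli):
with `0 < t* < π/(2a)` and `b > a tan(a t*)`, the matching constants
`c² = cos²(at*)/a² − sin²(at*)/b²` and `d = bt* + arcosh(cos(at*)/(ac))` are
well defined, satisfy `c cosh(d − bt*) = cos(at*)/a` and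
`bc sinh(d − bt*) = sin(at*)`, and consequently the pasted profile is `C¹`
at `t*`. -/
theorem stmt_12 (a tstar b : ℝ) (ha : 0 < a) (ht1 : 0 < tstar)
    (ht2 : tstar < Real.pi / (2 * a)) (hb : a * Real.tan (a * tstar) < b)
    (c : ℝ) (hcpos : 0 < c)
    (hc : c ^ 2 = Real.cos (a * tstar) ^ 2 / a ^ 2 - Real.sin (a * tstar) ^ 2 / b ^ 2)
    (d : ℝ) (hd : d = b * tstar + arcosh (Real.cos (a * tstar) / (a * c))) :
    0 < Real.cos (a * tstar) ^ 2 / a ^ 2 - Real.sin (a * tstar) ^ 2 / b ^ 2 ∧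
    1 ≤ Real.cos (a * tstar) / (a * c) ∧
    c * Real.cosh (d - b * tstar) = Real.cos (a * tstar) / a ∧
    b * c * Real.sinh (d - b * tstar) = Real.sin (a * tstar) ∧
    ContDiffAt ℝ 1
      (fun t => if t ≤ tstar then Real.cos (a * t) / a else c * Real.cosh (d - b * t))
      tstar := by
  have hθ1 : 0 < a * tstar := by positivity
  have hθ2 : a * tstar < Real.pi / 2 := by
    have h := (lt_div_iff₀ (by positivity : (0:ℝ) < 2 * a)).mp ht2
    nlinarith
  have hcosp : 0 < Real.cos (a * tstar) :=
    Real.cos_pos_of_mem_Ioo ⟨by linarith [Real.pi_pos], hθ2⟩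
  have hsinp : 0 < Real.sin (a * tstar) :=
    Real.sin_pos_of_pos_of_lt_pi hθ1 (by linarith [Real.pi_pos, hθ2])
  have htan : Real.tan (a * tstar) = Real.sin (a * tstar) / Real.cos (a * tstar) :=
    Real.tan_eq_sin_div_cos _
  have htanpos : 0 < Real.tan (a * tstar) :=
    Real.tan_pos_of_pos_of_lt_pi_div_two hθ1 hθ2
  have hbpos : 0 < b := lt_trans (by positivity) hb
  -- key inequality: b * cos > a * sin
  have hkey : a * Real.sin (a * tstar) < b * Real.cos (a * tstar) := by
    rw [htan, ← mul_div_assoc] at hb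
    exact (div_lt_iff₀ hcosp).mp hb
  have hi : 0 < Real.cos (a * tstar) ^ 2 / a ^ 2 - Real.sin (a * tstar) ^ 2 / b ^ 2 := by
    rw [sub_pos, div_lt_div_iff₀ (by positivity) (by positivity)]
    nlinarith [mul_pos ha hsinp, mul_pos hbpos hcosp]
  have hb2 : a ^ 2 * b ^ 2 * c ^ 2
      = b ^ 2 * Real.cos (a * tstar) ^ 2 - a ^ 2 * Real.sin (a * tstar) ^ 2 := by
    rw [hc]; field_simp
  have hii : 1 ≤ Real.cos (a * tstar) / (a * c) := by
    rw [le_div_iff₀ (by positivity), one_mul]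
    have hsq : (a * c) ^ 2 ≤ Real.cos (a * tstar) ^ 2 := by
      nlinarith [hb2, sq_nonneg (a * Real.sin (a * tstar)), sq_nonneg b, pow_pos hbpos 2]
    nlinarith [mul_pos ha hcpos, hcosp, hsq]
  have hx2 : (Real.cos (a * tstar) / (a * c)) ^ 2 - 1
      = (Real.sin (a * tstar) / (b * c)) ^ 2 := by
    field_simp
    nlinarith [hb2]
  have hdb : d - b * tstar = arcosh (Real.cos (a * tstar) / (a * c)) := by rw [hd]; ring
  have hiii : c * Real.cosh (d - b * tstar) = Real.cos (a * tstar) / a := by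
    rw [hdb, cosh_arcosh hii]; field_simp
  have hiv : b * c * Real.sinh (d - b * tstar) = Real.sin (a * tstar) := by
    rw [hdb, sinh_arcosh hii, hx2, Real.sqrt_sq (by positivity)]
    field_simp
  refine ⟨hi, hii, hiii, hiv, ?_⟩
  -- C¹ at tstar
  set f : ℝ → ℝ := fun t => if t ≤ tstar then Real.cos (a * t) / a else c * Real.cosh (d - b * t)
    with hf
  set g : ℝ → ℝ := fun t => if t ≤ tstar then -Real.sin (a * t)
      else -(b * c) * Real.sinh (d - b * t) with hg
  have hD1 : ∀ t : ℝ, HasDerivAt (fun s => Real.cos (a * s) / a) (-Real.sin (a * t)) t := by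
    intro t
    have h1 : HasDerivAt (fun s => Real.cos (a * s)) (-Real.sin (a * t) * a) t := by
      have := (Real.hasDerivAt_cos (a * t)).comp t ((hasDerivAt_id t).const_mul a)
      simpa [mul_comm, Function.comp_def] using this
    have h2 := h1.div_const a
    exact h2.congr_deriv (by rw [mul_div_assoc, div_self ha.ne', mul_one])
  have hD2 : ∀ t : ℝ, HasDerivAt (fun s => c * Real.cosh (d - b * s))
      (-(b * c) * Real.sinh (d - b * t)) t := by
    intro t
    have h1 : HasDerivAt (fun s : ℝ => d - b * s) (-b) t := by
      simpa using ((hasDerivAt_id t).const_mul b).const_sub d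
    have h2 := (Real.hasDerivAt_cosh (d - b * t)).comp t h1
    have := h2.const_mul c
    exact this.congr_deriv (by ring)
  have hDf : ∀ t : ℝ, HasDerivAt f (g t) t := by
    intro t
    rcases lt_trichotomy t tstar with h | h | h
    · have heq : f =ᶠ[nhds t] (fun s => Real.cos (a * s) / a) := by
        filter_upwards [Iio_mem_nhds h] with s hs
        have hs' : s ≤ tstar := le_of_lt hs
        simp [hf, hs']
      have : g t = -Real.sin (a * t) := by simp [hg, le_of_lt h]
      rw [this]
      exact (hD1 t).congr_of_eventuallyEq heq
    · subst h
      have hleft : HasDerivWithinAt f (-Real.sin (a * t)) (Set.Iic t) t := by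
        apply ((hD1 t).hasDerivWithinAt).congr_of_mem ?_ (Set.mem_Iic.2 le_rfl)
        intro s hs
        have hs' : s ≤ t := hs
        simp [hf, hs']
      have hright : HasDerivWithinAt f (-Real.sin (a * t)) (Set.Ici t) t := by
        have hval : -Real.sin (a * t) = -(b * c) * Real.sinh (d - b * t) := by
          rw [← hiv]; ring
        rw [hval]
        apply ((hD2 t).hasDerivWithinAt).congr_of_mem ?_ (Set.mem_Ici.2 le_rfl)
        intro s hs
        rcases eq_or_lt_of_le (Set.mem_Ici.mp hs) with h' | h'
        · subst h'; simp [hf, hiii]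
        · have hs' : ¬ s ≤ t := not_le.mpr h'
          simp [hf, hs']
      have : g t = -Real.sin (a * t) := by simp [hg]
      rw [this]
      have := hleft.union hright
      rwa [Set.Iic_union_Ici, hasDerivWithinAt_univ] at this
    · have heq : f =ᶠ[nhds t] (fun s => c * Real.cosh (d - b * s)) := by
        filter_upwards [Ioi_mem_nhds h] with s hs
        have hs' : ¬ s ≤ tstar := not_le.mpr hs
        simp [hf, hs']
      have : g t = -(b * c) * Real.sinh (d - b * t) := by simp [hg, not_le.mpr h]
      rw [this]
      exact (hD2 t).congr_of_eventuallyEq heq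
  have hgc : Continuous g := by
    apply Continuous.if_le
    · exact (Real.continuous_sin.comp (continuous_const.mul continuous_id)).neg
    · exact continuous_const.mul (Real.continuous_sinh.comp
        (continuous_const.sub (continuous_const.mul continuous_id)))
    · exact continuous_id
    · exact continuous_const
    · intro x hx; subst hx; rw [← hiv]; ring
  rw [contDiffAt_one_iff]
  refine ⟨fun t => ContinuousLinearMap.smulRight (1 : ℝ →L[ℝ] ℝ) (g t), Set.univ,
    Filter.univ_mem, ?_, fun t _ => (hDf t).hasFDerivAt⟩
  exact ((ContinuousLinearMap.smulRightL ℝ ℝ ℝ (1 : ℝ →L[ℝ] ℝ)).continuous.comp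
    hgc).continuousOn
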